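/- Let ψ and Ψ denote respectively the density and the cumulative distribution function of the standard Gaussian measure on ℝ. Then there exists a unique s* > 0 satisfying Ψ(−s*) = 2·s*·ψ(s*). Moreover, for every Σ > 0, the function eff : (0,∞) → ℝ defined by eff(ℓ) = 2·ℓ·Ψ(−ℓ²·√Σ/2) attains its global maximum on (0,∞) at the unique point ℓ* = √(2·s*)·Σ^{−1/4}; that is, eff(ℓ) < eff(ℓ*) for every ℓ ∈ (0,∞) with ℓ ≠ ℓ*. -/

import Mathlib

open MeasureTheory ProbabilityTheory

noncomputable section

/-- The density `ψ` of the standard Gaussian measure on `ℝ`. -/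
def stdGaussianDensity (t : ℝ) : ℝ := Real.exp (-t ^ 2 / 2) / Real.sqrt (2 * Real.pi)

/-- The cumulative distribution function `Ψ` of the standard Gaussian measure on `ℝ`. -/
def stdGaussianCDF (t : ℝ) : ℝ := ((gaussianReal 0 1) (Set.Iic t)).toReal

/-- The asymptotic efficiency `eff(ℓ) = 2ℓ·Ψ(-ℓ²√Σ/2)` of MALT with rescaled
time-step `ℓ`, for a given value `Σ > 0`. -/
def maltEff (S ℓ : ℝ) : ℝ := 2 * ℓ * stdGaussianCDF (-(ℓ ^ 2 * Real.sqrt S / 2))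

lemma stdGaussianDensity_eq : stdGaussianDensity = gaussianPDFReal 0 1 := by
  ext x
  simp [stdGaussianDensity, gaussianPDFReal, div_eq_inv_mul, mul_comm]

lemma psi_pos (t : ℝ) : 0 < stdGaussianDensity t := by
  unfold stdGaussianDensity; positivity

lemma psi_even (t : ℝ) : stdGaussianDensity (-t) = stdGaussianDensity t := by
  unfold stdGaussianDensity; rw [neg_pow]; norm_num

lemma psi_cont : Continuous stdGaussianDensity := by
  unfold stdGaussianDensity; fun_prop

lemma psi_integrable : Integrable stdGaussianDensity :=
  stdGaussianDensity_eq ▸ integrable_gaussianPDFReal 0 1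

lemma psi_hasDerivAt (t : ℝ) :
    HasDerivAt stdGaussianDensity (-t * stdGaussianDensity t) t := by
  have h1 : HasDerivAt (fun t : ℝ => -t ^ 2 / 2) (-t) t := by
    have := ((hasDerivAt_pow 2 t).neg.div_const 2)
    refine this.congr_deriv (Eq.symm ?_); ring
  have h2 := (h1.exp).div_const (Real.sqrt (2 * Real.pi))
  refine h2.congr_deriv (Eq.symm ?_)
  unfold stdGaussianDensity; ring

lemma cdf_eq (t : ℝ) : stdGaussianCDF t = ∫ x in Set.Iic t, stdGaussianDensity x := by
  rw [stdGaussianCDF, gaussianReal_apply_eq_integral 0 one_ne_zero,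
    ENNReal.toReal_ofReal (integral_nonneg fun x => gaussianPDFReal_nonneg 0 1 x),
    stdGaussianDensity_eq]

lemma Psi_hasDerivAt (t : ℝ) : HasDerivAt stdGaussianCDF (stdGaussianDensity t) t := by
  have key : stdGaussianCDF = fun u => stdGaussianCDF 0 + ∫ x in (0:ℝ)..u, stdGaussianDensity x := by
    funext u
    have := intervalIntegral.integral_Iic_sub_Iic (μ := volume) (f := stdGaussianDensity)
      (psi_integrable.integrableOn) (psi_integrable.integrableOn) (a := 0) (b := u)
    rw [cdf_eq, cdf_eq]; linarith
  rw [key]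
  exact (intervalIntegral.integral_hasDerivAt_right
    psi_integrable.intervalIntegrable
    psi_cont.stronglyMeasurable.stronglyMeasurableAtFilter
    psi_cont.continuousAt).const_add _

lemma Psi_tendsto_atBot : Filter.Tendsto stdGaussianCDF Filter.atBot (nhds 0) := by
  have : stdGaussianCDF = fun t => ProbabilityTheory.cdf (gaussianReal 0 1) t := by
    funext t; exact (cdf_eq_real _ t).symm
  rw [this]; exact tendsto_cdf_atBot _

lemma Psi_zero : stdGaussianCDF 0 = 1/2 := by
  have htot : ∫ x, stdGaussianDensity x = 1 := by
    rw [stdGaussianDensity_eq]; exact integral_gaussianPDFReal_eq_one 0 one_ne_zero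
  have hsplit : (∫ x in Set.Iic (0:ℝ), stdGaussianDensity x)
      + ∫ x in Set.Ioi (0:ℝ), stdGaussianDensity x = 1 := by
    rw [← htot]
    exact intervalIntegral.integral_Iic_add_Ioi psi_integrable.integrableOn psi_integrable.integrableOn
  have hsymm : ∫ x in Set.Iic (0:ℝ), stdGaussianDensity x
      = ∫ x in Set.Ioi (0:ℝ), stdGaussianDensity x := by
    have := integral_comp_neg_Iic (0:ℝ) stdGaussianDensity
    simp_rw [psi_even, neg_zero] at this
    exact this
  rw [cdf_eq]; linarith


/-- `g(s) = Ψ(-s) - 2 s ψ(s)`. -/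
def psiG (s : ℝ) : ℝ := stdGaussianCDF (-s) - 2 * s * stdGaussianDensity s

/-- `M(s) = Ψ(-s) - ψ(s)/s` (negative Mills gap). -/
def psiM (s : ℝ) : ℝ := stdGaussianCDF (-s) - stdGaussianDensity s / s

/-- `h(s) = √s · Ψ(-s)`. -/
def psiH (s : ℝ) : ℝ := Real.sqrt s * stdGaussianCDF (-s)

lemma PsiNeg_hasDerivAt (s : ℝ) :
    HasDerivAt (fun s : ℝ => stdGaussianCDF (-s)) (-stdGaussianDensity s) s := by
  have := (Psi_hasDerivAt (-s)).comp s (hasDerivAt_neg s)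
  rw [psi_even, mul_neg_one] at this
  exact this

lemma psiM_hasDerivAt {s : ℝ} (hs : s ≠ 0) :
    HasDerivAt psiM (stdGaussianDensity s / s ^ 2) s := by
  have hdiv : HasDerivAt (fun s : ℝ => stdGaussianDensity s / s)
      ((-s * stdGaussianDensity s * s - stdGaussianDensity s * 1) / s ^ 2) s :=
    (psi_hasDerivAt s).div (hasDerivAt_id s) hs
  have := (PsiNeg_hasDerivAt s).sub hdiv
  refine this.congr_deriv (Eq.symm ?_)
  field_simp
  ring

lemma psiG_hasDerivAt (s : ℝ) :
    HasDerivAt psiG (stdGaussianDensity s * (2 * s ^ 2 - 3)) s := by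
  have h2 : HasDerivAt (fun s : ℝ => 2 * s * stdGaussianDensity s)
      (2 * stdGaussianDensity s + 2 * s * (-s * stdGaussianDensity s)) s := by
    have := ((hasDerivAt_id s).const_mul 2).mul (psi_hasDerivAt s)
    refine this.congr_deriv (Eq.symm ?_); simp only [id_eq]; ring
  have := (PsiNeg_hasDerivAt s).sub h2
  refine this.congr_deriv (Eq.symm ?_); ring

lemma psiM_tendsto : Filter.Tendsto psiM Filter.atTop (nhds 0) := by
  have h1 : Filter.Tendsto (fun s : ℝ => stdGaussianCDF (-s)) Filter.atTop (nhds 0) :=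
    Psi_tendsto_atBot.comp Filter.tendsto_neg_atTop_atBot
  have h2 : Filter.Tendsto (fun s : ℝ => stdGaussianDensity s / s) Filter.atTop (nhds 0) := by
    have ha : Filter.Tendsto stdGaussianDensity Filter.atTop (nhds 0) := by
      have : Filter.Tendsto (fun s : ℝ => -s ^ 2 / 2) Filter.atTop Filter.atBot := by
        apply Filter.Tendsto.atBot_div_const (by norm_num)
        exact Filter.tendsto_neg_atBot_iff.mpr (Filter.tendsto_pow_atTop (by norm_num))
      have hcomp : Filter.Tendsto (fun s : ℝ => Real.exp (-s ^ 2 / 2))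
          Filter.atTop (nhds 0) := Real.tendsto_exp_atBot.comp this
      have h0 : (0:ℝ) / Real.sqrt (2 * Real.pi) = 0 := by simp
      have := hcomp.div_const (Real.sqrt (2 * Real.pi))
      rw [h0] at this
      exact this
    have hb : Filter.Tendsto (fun s : ℝ => s⁻¹) Filter.atTop (nhds 0) :=
      tendsto_inv_atTop_zero
    simpa [div_eq_mul_inv] using ha.mul hb
  show Filter.Tendsto (fun s => stdGaussianCDF (-s) - stdGaussianDensity s / s) _ _
  simpa using h1.sub h2

lemma psiM_neg {s : ℝ} (hs : 0 < s) : psiM s < 0 := by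
  have mono : StrictMonoOn psiM (Set.Ioi 0) := by
    apply strictMonoOn_of_deriv_pos (convex_Ioi 0)
    · intro x hx
      exact ((psiM_hasDerivAt (ne_of_gt hx)).continuousAt).continuousWithinAt
    · intro x hx
      rw [interior_Ioi] at hx
      rw [(psiM_hasDerivAt (ne_of_gt hx)).deriv]
      exact div_pos (psi_pos x) (pow_pos hx 2)
  have h1 : psiM (s + 1) ≤ 0 := by
    refine ge_of_tendsto psiM_tendsto ?_
    filter_upwards [Filter.eventually_ge_atTop (s + 1)] with t ht
    exact mono.monotoneOn (by simp; linarith) (by simp; linarith) ht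
  have h2 : psiM s < psiM (s + 1) := mono hs (by simp; linarith) (by linarith)
  linarith

lemma psiG_lt_of_ge {s : ℝ} (hs : 1 / Real.sqrt 2 ≤ s) : psiG s < 0 := by
  have hs0 : 0 < s := lt_of_lt_of_le (by positivity) hs
  have h2 : 1 ≤ 2 * s ^ 2 := by
    have hsq : (1 / Real.sqrt 2) ^ 2 ≤ s ^ 2 := by
      apply pow_le_pow_left₀ (by positivity) hs
    rw [div_pow, one_pow] at hsq
    rw [Real.sq_sqrt (by norm_num : (0:ℝ) ≤ 2)] at hsq
    linarith
  have hM := psiM_neg hs0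
  have hpsi := psi_pos s
  have : psiG s = psiM s + stdGaussianDensity s * (1 - 2 * s ^ 2) / s := by
    unfold psiG psiM; field_simp; ring
  rw [this]
  have : stdGaussianDensity s * (1 - 2 * s ^ 2) / s ≤ 0 := by
    apply div_nonpos_of_nonpos_of_nonneg _ hs0.le
    nlinarith
  linarith

lemma psiG_strictAnti : StrictAntiOn psiG (Set.Ioc 0 1) := by
  apply strictAntiOn_of_deriv_neg (convex_Ioc 0 1)
  · intro x _
    exact ((psiG_hasDerivAt x).continuousAt).continuousWithinAt
  · intro x hx
    rw [interior_Ioc] at hx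
    rw [(psiG_hasDerivAt x).deriv]
    have hψ := psi_pos x
    have hneg : 2 * x ^ 2 - 3 < 0 := by nlinarith [hx.1, hx.2]
    exact mul_neg_of_pos_of_neg hψ hneg

lemma psiG_zero : psiG 0 = 1 / 2 := by
  unfold psiG
  rw [neg_zero, Psi_zero]; ring

lemma sqrt2_inv_lt_one : 1 / Real.sqrt 2 < 1 := by
  have h : (1:ℝ) < Real.sqrt 2 := by
    rw [show (1:ℝ) = Real.sqrt 1 by simp]
    exact Real.sqrt_lt_sqrt (by norm_num) (by norm_num)
  rw [div_lt_one (by positivity)]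
  exact h

lemma psiG_root_lt {s : ℝ} (hs : 0 < s) (h : psiG s = 0) : s < 1 / Real.sqrt 2 := by
  by_contra hle
  push_neg at hle
  have := psiG_lt_of_ge hle
  linarith

lemma exists_sstar : ∃ s : ℝ, 0 < s ∧ psiG s = 0 := by
  have hb : psiG (1 / Real.sqrt 2) < 0 := psiG_lt_of_ge le_rfl
  have h0 : (0:ℝ) ≤ 1 / Real.sqrt 2 := by positivity
  have hcont : ContinuousOn psiG (Set.Icc 0 (1 / Real.sqrt 2)) :=
    fun x _ => (psiG_hasDerivAt x).continuousAt.continuousWithinAt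
  have hmem : (0:ℝ) ∈ Set.Icc (psiG (1 / Real.sqrt 2)) (psiG 0) := by
    rw [psiG_zero]
    exact ⟨hb.le, by norm_num⟩
  obtain ⟨s, hs, hgs⟩ := intermediate_value_Icc' h0 hcont hmem
  refine ⟨s, ?_, hgs⟩
  rcases hs.1.eq_or_lt with h | h
  · exfalso; rw [← h, psiG_zero] at hgs; norm_num at hgs
  · exact h

lemma psiG_root_unique {s t : ℝ} (hs : 0 < s) (ht : 0 < t)
    (hgs : psiG s = 0) (hgt : psiG t = 0) : s = t := by
  have h1 := psiG_root_lt hs hgs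
  have h2 := psiG_root_lt ht hgt
  have hlt := sqrt2_inv_lt_one
  exact psiG_strictAnti.injOn ⟨hs, by linarith⟩ ⟨ht, by linarith⟩ (by rw [hgs, hgt])

lemma psiH_hasDerivAt {s : ℝ} (hs : 0 < s) :
    HasDerivAt psiH (psiG s / (2 * Real.sqrt s)) s := by
  have h1 := (Real.hasDerivAt_sqrt (ne_of_gt hs)).mul (PsiNeg_hasDerivAt s)
  refine h1.congr_deriv (Eq.symm ?_)
  have hsq : Real.sqrt s * Real.sqrt s = s := Real.mul_self_sqrt hs.le
  have hpos : (0:ℝ) < Real.sqrt s := Real.sqrt_pos.mpr hs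
  rw [div_eq_iff (by positivity : (2:ℝ) * Real.sqrt s ≠ 0)]
  unfold psiG
  field_simp
  ring_nf
  linear_combination (2 * stdGaussianDensity s) * Real.sq_sqrt hs.le

-- sign of psiG on either side of the root
lemma psiG_pos_of_lt {sstar s : ℝ} (hst : 0 < sstar) (hroot : psiG sstar = 0)
    (hs : 0 < s) (hlt : s < sstar) : 0 < psiG s := by
  have h1 := psiG_root_lt hst hroot
  have hlt1 := sqrt2_inv_lt_one
  have := psiG_strictAnti ⟨hs, by linarith⟩ ⟨hst, by linarith⟩ hlt
  linarith

lemma psiG_neg_of_gt {sstar s : ℝ} (hst : 0 < sstar) (hroot : psiG sstar = 0)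
    (hgt : sstar < s) : psiG s < 0 := by
  rcases le_or_gt (1 / Real.sqrt 2) s with h | h
  · exact psiG_lt_of_ge h
  · have h1 := psiG_root_lt hst hroot
    have hlt1 := sqrt2_inv_lt_one
    have := psiG_strictAnti ⟨hst, by linarith⟩ ⟨by linarith, by linarith⟩ hgt
    linarith

lemma psiH_lt_max {sstar s : ℝ} (hst : 0 < sstar) (hroot : psiG sstar = 0)
    (hs : 0 < s) (hne : s ≠ sstar) : psiH s < psiH sstar := by
  rcases lt_or_gt_of_ne hne with hlt | hgt
  · have mono : StrictMonoOn psiH (Set.Ioc 0 sstar) := by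
      apply strictMonoOn_of_deriv_pos (convex_Ioc 0 sstar)
      · intro x hx
        exact ((psiH_hasDerivAt hx.1).continuousAt).continuousWithinAt
      · intro x hx
        rw [interior_Ioc] at hx
        rw [(psiH_hasDerivAt hx.1).deriv]
        refine div_pos (psiG_pos_of_lt hst hroot hx.1 hx.2) ?_
        have : 0 < Real.sqrt x := Real.sqrt_pos.mpr hx.1
        positivity
    exact mono ⟨hs, hlt.le⟩ ⟨hst, le_rfl⟩ hlt
  · have anti : StrictAntiOn psiH (Set.Ici sstar) := by
      apply strictAntiOn_of_deriv_neg (convex_Ici sstar)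
      · intro x hx
        exact ((psiH_hasDerivAt (lt_of_lt_of_le hst hx)).continuousAt).continuousWithinAt
      · intro x hx
        rw [interior_Ici] at hx
        rw [(psiH_hasDerivAt (hst.trans hx)).deriv]
        apply div_neg_of_neg_of_pos (psiG_neg_of_gt hst hroot hx)
        have : 0 < Real.sqrt x := Real.sqrt_pos.mpr (hst.trans hx)
        positivity
    exact anti (Set.mem_Ici.mpr le_rfl) (Set.mem_Ici.mpr hgt.le) hgt

lemma rpow_quarter_sq {S : ℝ} (hS : 0 < S) : (S ^ ((1:ℝ)/4)) ^ 2 = Real.sqrt S := by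
  rw [← Real.rpow_natCast (S ^ ((1:ℝ)/4)) 2, ← Real.rpow_mul hS.le, Real.sqrt_eq_rpow]
  norm_num

lemma maltEff_eq {S ℓ : ℝ} (hS : 0 < S) (hl : 0 < ℓ) :
    maltEff S ℓ = (2 * Real.sqrt 2 * S ^ (-(1:ℝ)/4)) * psiH (ℓ ^ 2 * Real.sqrt S / 2) := by
  have hq : (0:ℝ) < S ^ ((1:ℝ)/4) := Real.rpow_pos_of_pos hS _
  have h1 : ℓ ^ 2 * Real.sqrt S / 2 = (ℓ * S ^ ((1:ℝ)/4) / Real.sqrt 2) ^ 2 := by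
    rw [div_pow, mul_pow, rpow_quarter_sq hS, Real.sq_sqrt (by norm_num : (0:ℝ) ≤ 2)]
  have key : 2 * Real.sqrt 2 * S ^ (-(1:ℝ)/4) * (ℓ * S ^ ((1:ℝ)/4) / Real.sqrt 2) = 2 * ℓ := by
    have h2 : S ^ (-(1:ℝ)/4) * S ^ ((1:ℝ)/4) = 1 := by
      rw [← Real.rpow_add hS]; norm_num
    have h3 : Real.sqrt 2 * Real.sqrt 2 = 2 := Real.mul_self_sqrt (by norm_num)
    have hs2 : (0:ℝ) < Real.sqrt 2 := by positivity
    rw [show 2 * Real.sqrt 2 * S ^ (-(1:ℝ)/4) * (ℓ * S ^ ((1:ℝ)/4) / Real.sqrt 2) = 2 * ℓ * (S ^ (-(1:ℝ)/4) * S ^ ((1:ℝ)/4)) * (Real.sqrt 2 / Real.sqrt 2) by ring, h2, div_self hs2.ne']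
    ring
  unfold maltEff psiH
  rw [h1, Real.sqrt_sq (by positivity)]
  calc 2 * ℓ * stdGaussianCDF (-(ℓ * S ^ ((1:ℝ)/4) / Real.sqrt 2) ^ 2)
      = (2 * Real.sqrt 2 * S ^ (-(1:ℝ)/4) * (ℓ * S ^ ((1:ℝ)/4) / Real.sqrt 2))
        * stdGaussianCDF (-(ℓ * S ^ ((1:ℝ)/4) / Real.sqrt 2) ^ 2) := by rw [key]
    _ = _ := by ring

/-- The final optimization claim of Proposition ScalingOptimality: there is a unique
`s* > 0` with `Ψ(-s*) = 2 s* ψ(s*)`, and for every `Σ > 0` the efficiency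
`eff(ℓ) = 2ℓΨ(-ℓ²√Σ/2)` attains its global maximum on `(0,∞)` exactly at
`ℓ* = √(2s*)·Σ^{-1/4}`. -/
theorem malt_optimal_tuning :
    ∃ sstar : ℝ,
      (0 < sstar ∧ stdGaussianCDF (-sstar) = 2 * sstar * stdGaussianDensity sstar) ∧
      (∀ s : ℝ, 0 < s → stdGaussianCDF (-s) = 2 * s * stdGaussianDensity s → s = sstar) ∧
      ∀ S : ℝ, 0 < S → ∀ ℓ : ℝ, 0 < ℓ →
        ℓ ≠ Real.sqrt (2 * sstar) * S ^ (-(1 : ℝ) / 4) →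
        maltEff S ℓ < maltEff S (Real.sqrt (2 * sstar) * S ^ (-(1 : ℝ) / 4)) := by
  obtain ⟨sstar, hst, hroot⟩ := exists_sstar
  have hrooteq : stdGaussianCDF (-sstar) = 2 * sstar * stdGaussianDensity sstar := by
    unfold psiG at hroot; linarith
  refine ⟨sstar, ⟨hst, hrooteq⟩, ?_, ?_⟩
  · intro s hs heq
    exact psiG_root_unique hs hst (by unfold psiG; linarith) hroot
  · intro S hS ℓ hl hne
    set L := Real.sqrt (2 * sstar) * S ^ (-(1:ℝ)/4) with hLdef
    have hL : 0 < L :=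
      mul_pos (Real.sqrt_pos.mpr (by linarith)) (Real.rpow_pos_of_pos hS _)
    have e1 : (S ^ (-(1:ℝ)/4)) ^ 2 * Real.sqrt S = 1 := by
      rw [← Real.rpow_natCast (S ^ (-(1:ℝ)/4)) 2, ← Real.rpow_mul hS.le,
        Real.sqrt_eq_rpow, ← Real.rpow_add hS]
      norm_num
    have hLs : L ^ 2 * Real.sqrt S / 2 = sstar := by
      rw [hLdef, mul_pow, Real.sq_sqrt (by linarith : (0:ℝ) ≤ 2 * sstar)]
      linear_combination sstar * e1
    have hsS : (0:ℝ) < Real.sqrt S := Real.sqrt_pos.mpr hS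
    have hs_pos : 0 < ℓ ^ 2 * Real.sqrt S / 2 := by positivity
    have hs_ne : ℓ ^ 2 * Real.sqrt S / 2 ≠ sstar := by
      intro h
      apply hne
      have hsq : ℓ ^ 2 = L ^ 2 := by
        have := hLs
        field_simp at h this
        nlinarith [h, this]
      calc ℓ = Real.sqrt (ℓ ^ 2) := (Real.sqrt_sq hl.le).symm
        _ = Real.sqrt (L ^ 2) := by rw [hsq]
        _ = L := Real.sqrt_sq hL.le
    rw [maltEff_eq hS hl, maltEff_eq hS hL, hLs]
    refine mul_lt_mul_of_pos_left (psiH_lt_max hst hroot hs_pos hs_ne) ?_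
    have : (0:ℝ) < S ^ (-(1:ℝ)/4) := Real.rpow_pos_of_pos hS _
    positivity


end
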